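/- Let S₁ and S₂ be commutative semirings (possibly without unit), Θ a congruence on S₁ × S₂, and let Π₁ and Π₂ be the congruences on S₁ × S₂ defined by x Πᵢ y iff πᵢ(x) = πᵢ(y). If [(0,0)]((Θ ⊔ Π₁) ⊓ Π₂) ⊆ [(0,0)]Θ and [(0,0)]((Θ ⊔ Π₂) ⊓ Π₁) ⊆ [(0,0)]Θ, where ⊔ and ⊓ denote join and meet in the lattice of congruences on S₁ × S₂, then [(0,0)]Θ is strongly directly decomposable, i.e., [(0,0)]Θ = {a ∈ S₁ | ∃ b c, (a,b) Θ (0,c)} × {e ∈ S₂ | ∃ d f, (d,e) Θ (f,0)}. -/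
import Mathlib

/-- The congruence `Π₁` on `S₁ × S₂` identifying pairs with equal first components. -/
def projRingCon₁ (S₁ S₂ : Type*) [NonUnitalCommSemiring S₁] [NonUnitalCommSemiring S₂] :
    RingCon (S₁ × S₂) where
  r x y := x.1 = y.1
  iseqv := ⟨fun _ => rfl, Eq.symm, Eq.trans⟩
  mul' {a b c d} h₁ h₂ := by
    show (a * c).1 = (b * d).1
    simp only [Prod.fst_mul]
    rw [show a.1 = b.1 from h₁, show c.1 = d.1 from h₂]
  add' {a b c d} h₁ h₂ := by
    show (a + c).1 = (b + d).1
    simp only [Prod.fst_add]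
    rw [show a.1 = b.1 from h₁, show c.1 = d.1 from h₂]

/-- The congruence `Π₂` on `S₁ × S₂` identifying pairs with equal second components. -/
def projRingCon₂ (S₁ S₂ : Type*) [NonUnitalCommSemiring S₁] [NonUnitalCommSemiring S₂] :
    RingCon (S₁ × S₂) where
  r x y := x.2 = y.2
  iseqv := ⟨fun _ => rfl, Eq.symm, Eq.trans⟩
  mul' {a b c d} h₁ h₂ := by
    show (a * c).2 = (b * d).2
    simp only [Prod.snd_mul]
    rw [show a.2 = b.2 from h₁, show c.2 = d.2 from h₂]
  add' {a b c d} h₁ h₂ := by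
    show (a + c).2 = (b + d).2
    simp only [Prod.snd_add]
    rw [show a.2 = b.2 from h₁, show c.2 = d.2 from h₂]

theorem stmt_11 {S₁ S₂ : Type*} [NonUnitalCommSemiring S₁] [NonUnitalCommSemiring S₂]
    (Θ : RingCon (S₁ × S₂))
    (h₁ : {x : S₁ × S₂ | ((Θ ⊔ projRingCon₁ S₁ S₂) ⊓ projRingCon₂ S₁ S₂) x (0, 0)} ⊆
      {x : S₁ × S₂ | Θ x (0, 0)})
    (h₂ : {x : S₁ × S₂ | ((Θ ⊔ projRingCon₂ S₁ S₂) ⊓ projRingCon₁ S₁ S₂) x (0, 0)} ⊆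
      {x : S₁ × S₂ | Θ x (0, 0)}) :
    {x : S₁ × S₂ | Θ x (0, 0)} =
      {a : S₁ | ∃ (b c : S₂), Θ (a, b) (0, c)} ×ˢ
        {e : S₂ | ∃ (d f : S₁), Θ (d, e) (f, 0)} := by
  ext ⟨a, e⟩
  simp only [Set.mem_setOf_eq, Set.mem_prod]
  constructor
  · intro h
    exact ⟨⟨e, 0, h⟩, ⟨a, 0, h⟩⟩
  · rintro ⟨⟨b, c, hb⟩, ⟨d, f, hd⟩⟩
    have J1 : Θ ≤ Θ ⊔ projRingCon₁ S₁ S₂ := le_sup_left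
    have J1' : projRingCon₁ S₁ S₂ ≤ Θ ⊔ projRingCon₁ S₁ S₂ := le_sup_right
    have J2 : Θ ≤ Θ ⊔ projRingCon₂ S₁ S₂ := le_sup_left
    have J2' : projRingCon₂ S₁ S₂ ≤ Θ ⊔ projRingCon₂ S₁ S₂ := le_sup_right
    have H1 : Θ (a, 0) (0, 0) := by
      apply h₁
      refine ⟨?_, rfl⟩
      have s1 : (Θ ⊔ projRingCon₁ S₁ S₂) (a, 0) (a, b) := RingCon.le_def.mp J1' rfl
      have s2 : (Θ ⊔ projRingCon₁ S₁ S₂) (a, b) (0, c) := RingCon.le_def.mp J1 hb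
      have s3 : (Θ ⊔ projRingCon₁ S₁ S₂) (0, c) ((0, 0) : S₁ × S₂) :=
        RingCon.le_def.mp J1' rfl
      exact (Θ ⊔ projRingCon₁ S₁ S₂).trans s1 ((Θ ⊔ projRingCon₁ S₁ S₂).trans s2 s3)
    have H2 : Θ (0, e) (0, 0) := by
      apply h₂
      refine ⟨?_, rfl⟩
      have s1 : (Θ ⊔ projRingCon₂ S₁ S₂) (0, e) (d, e) := RingCon.le_def.mp J2' rfl
      have s2 : (Θ ⊔ projRingCon₂ S₁ S₂) (d, e) (f, 0) := RingCon.le_def.mp J2 hd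
      have s3 : (Θ ⊔ projRingCon₂ S₁ S₂) (f, 0) ((0, 0) : S₁ × S₂) :=
        RingCon.le_def.mp J2' rfl
      exact (Θ ⊔ projRingCon₂ S₁ S₂).trans s1 ((Θ ⊔ projRingCon₂ S₁ S₂).trans s2 s3)
    have := Θ.add H1 H2
    simpa using this
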